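/- Let θ be a complex number, a, q ∈ ℤ[i] with q ≠ 0 and gcd(a,q) = 1, and suppose θ = a/q + γ where |γ| ≤ C|q|^{-2} with C := 2 + √2. Let R ⊂ ℂ be a rectangle {s : a₁ < Re(s) ≤ b₁, a₂ < Im(s) ≤ b₂} with side lengths b₁ − a₁ ≤ |q|/(4C) and b₂ − a₂ ≤ |q|/(4C). Then for all n₁, n₂ ∈ ℤ[i] ∩ R with n₁ ≠ n₂, one has ‖n₁θ − n₂θ‖ ≥ 1/(2√2·|q|). -/

import Mathlib

/-- Distance from a real number to the nearest integer. -/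
noncomputable def dInt (t : ℝ) : ℝ := min (Int.fract t) (1 - Int.fract t)

/-- Distance from a complex number to the nearest Gaussian integer in the supremum norm. -/
noncomputable def dGauss (z : ℂ) : ℝ := max (dInt z.re) (dInt z.im)

/-- The complex absolute value of a Gaussian integer. -/
noncomputable def absG (n : GaussianInt) : ℝ := ‖GaussianInt.toComplex n‖

lemma absG_one_le {x : GaussianInt} (hx : x ≠ 0) : 1 ≤ absG x := by
  have h1 : (1 : ℝ) ≤ Complex.normSq (GaussianInt.toComplex x) := by
    rw [← GaussianInt.intCast_real_norm]
    exact_mod_cast GaussianInt.norm_pos.2 hx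
  have h2 : ‖GaussianInt.toComplex x‖ ^ 2 = Complex.normSq (GaussianInt.toComplex x) :=
    Complex.sq_norm _
  unfold absG
  nlinarith [norm_nonneg (GaussianInt.toComplex x)]

lemma dInt_eq_abs_sub_round (t : ℝ) : dInt t = |t - round t| :=
  (abs_sub_round_eq_min t).symm

set_option maxHeartbeats 1000000 in
theorem spacing_in_rectangle (θ : ℂ) (a q : GaussianInt) (hq : q ≠ 0) (hcop : IsCoprime a q)
    (hγ : ‖θ - GaussianInt.toComplex a / GaussianInt.toComplex q‖ ≤
      (2 + Real.sqrt 2) / absG q ^ 2)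
    (a₁ b₁ a₂ b₂ : ℝ)
    (hside₁ : b₁ - a₁ ≤ absG q / (4 * (2 + Real.sqrt 2)))
    (hside₂ : b₂ - a₂ ≤ absG q / (4 * (2 + Real.sqrt 2)))
    (n₁ n₂ : GaussianInt)
    (hn₁ : a₁ < (GaussianInt.toComplex n₁).re ∧ (GaussianInt.toComplex n₁).re ≤ b₁ ∧
      a₂ < (GaussianInt.toComplex n₁).im ∧ (GaussianInt.toComplex n₁).im ≤ b₂)
    (hn₂ : a₁ < (GaussianInt.toComplex n₂).re ∧ (GaussianInt.toComplex n₂).re ≤ b₁ ∧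
      a₂ < (GaussianInt.toComplex n₂).im ∧ (GaussianInt.toComplex n₂).im ≤ b₂)
    (hne : n₁ ≠ n₂) :
    1 / (2 * Real.sqrt 2 * absG q) ≤
      dGauss (GaussianInt.toComplex n₁ * θ - GaussianInt.toComplex n₂ * θ) := by
  obtain ⟨h1a, h1b, h1c, h1d⟩ := hn₁
  obtain ⟨h2a, h2b, h2c, h2d⟩ := hn₂
  have hs : Real.sqrt 2 ^ 2 = 2 := Real.sq_sqrt (by norm_num)
  have hs0 : 0 < Real.sqrt 2 := Real.sqrt_pos.2 (by norm_num)
  have hC0 : (0 : ℝ) < 2 + Real.sqrt 2 := by linarith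
  have hQ0 : GaussianInt.toComplex q ≠ 0 := by
    rwa [Ne, GaussianInt.toComplex_eq_zero]
  have hQa : 0 < absG q := norm_pos_iff.mpr hQ0
  set n : GaussianInt := n₁ - n₂ with hn_def
  have hn0 : n ≠ 0 := sub_ne_zero.2 hne
  have hNC : GaussianInt.toComplex n = GaussianInt.toComplex n₁ - GaussianInt.toComplex n₂ :=
    GaussianInt.toComplex_sub _ _
  have hNre : |(GaussianInt.toComplex n).re| ≤ absG q / (4 * (2 + Real.sqrt 2)) := by
    rw [hNC]
    rw [abs_le]
    constructor <;> simp only [Complex.sub_re] <;> linarith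
  have hNim : |(GaussianInt.toComplex n).im| ≤ absG q / (4 * (2 + Real.sqrt 2)) := by
    rw [hNC]
    rw [abs_le]
    constructor <;> simp only [Complex.sub_im] <;> linarith
  have hB0 : 0 ≤ absG q / (4 * (2 + Real.sqrt 2)) := by positivity
  have hNabs : ‖GaussianInt.toComplex n‖ ≤
      Real.sqrt 2 * (absG q / (4 * (2 + Real.sqrt 2))) := by
    have h2 : ‖GaussianInt.toComplex n‖ ^ 2 =
        (GaussianInt.toComplex n).re ^ 2 + (GaussianInt.toComplex n).im ^ 2 := by
      rw [Complex.sq_norm, Complex.normSq_apply]; ring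
    have hsq : ‖GaussianInt.toComplex n‖ ^ 2 ≤
        (Real.sqrt 2 * (absG q / (4 * (2 + Real.sqrt 2)))) ^ 2 := by
      rw [h2, mul_pow, hs]
      nlinarith [mul_self_le_mul_self (abs_nonneg (GaussianInt.toComplex n).re) hNre,
        mul_self_le_mul_self (abs_nonneg (GaussianInt.toComplex n).im) hNim,
        sq_abs (GaussianInt.toComplex n).re, sq_abs (GaussianInt.toComplex n).im]
    exact (pow_le_pow_iff_left₀ (norm_nonneg _) (by positivity) two_ne_zero).1 hsq
  have hndvd : ¬ q ∣ n := by
    intro hdvd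
    obtain ⟨c, hcq⟩ := hdvd
    have hc : c ≠ 0 := by rintro rfl; rw [mul_zero] at hcq; exact hn0 hcq
    have habsc : 1 ≤ absG c := absG_one_le hc
    have hmul : ‖GaussianInt.toComplex n‖ = absG q * absG c := by
      rw [hcq, GaussianInt.toComplex_mul, norm_mul]; rfl
    rw [hmul] at hNabs
    have hle : absG q ≤ absG q * absG c := le_mul_of_one_le_right hQa.le habsc
    have hlt : Real.sqrt 2 * (absG q / (4 * (2 + Real.sqrt 2))) < absG q := by
      rw [mul_div_assoc', div_lt_iff₀ (by positivity)]
      nlinarith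
    linarith
  have hqna : ¬ q ∣ n * a := fun h => hndvd (hcop.symm.dvd_of_dvd_mul_right h)
  set z : ℂ := GaussianInt.toComplex n₁ * θ - GaussianInt.toComplex n₂ * θ with hz
  have hzn : z = GaussianInt.toComplex n * θ := by rw [hz, hNC]; ring
  set m : GaussianInt := ⟨round z.re, round z.im⟩ with hm
  have hmre : (GaussianInt.toComplex m).re = (round z.re : ℝ) := GaussianInt.re_toComplex _ _
  have hmim : (GaussianInt.toComplex m).im = (round z.im : ℝ) := GaussianInt.im_toComplex _ _
  -- key lower bound on rational approximation part
  have hne' : n * a - m * q ≠ 0 := by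
    intro h
    exact hqna ⟨m, by rw [sub_eq_zero] at h; rw [h, mul_comm]⟩
  have h1le : 1 ≤ ‖GaussianInt.toComplex n * GaussianInt.toComplex a -
      GaussianInt.toComplex m * GaussianInt.toComplex q‖ := by
    have := absG_one_le hne'
    unfold absG at this
    rwa [GaussianInt.toComplex_sub, GaussianInt.toComplex_mul, GaussianInt.toComplex_mul] at this
  have key : 1 / absG q ≤ ‖
      (GaussianInt.toComplex n * (GaussianInt.toComplex a / GaussianInt.toComplex q)
        - GaussianInt.toComplex m)‖ := by
    have heq : GaussianInt.toComplex n * (GaussianInt.toComplex a / GaussianInt.toComplex q)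
        - GaussianInt.toComplex m =
        (GaussianInt.toComplex n * GaussianInt.toComplex a -
          GaussianInt.toComplex m * GaussianInt.toComplex q) / GaussianInt.toComplex q := by
      field_simp
    rw [heq, norm_div]
    exact div_le_div_of_nonneg_right h1le hQa.le
  have hγbound : ‖GaussianInt.toComplex n *
      (θ - GaussianInt.toComplex a / GaussianInt.toComplex q)‖ ≤ Real.sqrt 2 / (4 * absG q) := by
    rw [norm_mul]
    have hb := mul_le_mul hNabs hγ (norm_nonneg _) (by positivity)
    refine hb.trans_eq ?_
    field_simp
  have hlower : (1 - Real.sqrt 2 / 4) / absG q ≤ ‖z - GaussianInt.toComplex m‖ := by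
    have hsplit : z - GaussianInt.toComplex m =
        (GaussianInt.toComplex n * (GaussianInt.toComplex a / GaussianInt.toComplex q)
          - GaussianInt.toComplex m) +
        GaussianInt.toComplex n * (θ - GaussianInt.toComplex a / GaussianInt.toComplex q) := by
      rw [hzn]; ring
    set X : ℂ := GaussianInt.toComplex n * (GaussianInt.toComplex a / GaussianInt.toComplex q)
      - GaussianInt.toComplex m with hX
    set Y : ℂ := GaussianInt.toComplex n * (θ - GaussianInt.toComplex a / GaussianInt.toComplex q)
      with hY
    have htri : ‖X‖ ≤ ‖X + Y‖ + ‖Y‖ := by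
      have h := norm_add_le (X + Y) (-Y)
      simpa using h
    have heq : (1 - Real.sqrt 2 / 4) / absG q = 1 / absG q - Real.sqrt 2 / (4 * absG q) := by
      field_simp
    rw [heq, hsplit]
    linarith
  have hd0 : 0 ≤ dGauss z := by
    simp only [dGauss, dInt_eq_abs_sub_round]
    exact le_max_of_le_left (abs_nonneg _)
  have habs_le : ‖z - GaussianInt.toComplex m‖ ≤ Real.sqrt 2 * dGauss z := by
    have hre : |(z - GaussianInt.toComplex m).re| ≤ dGauss z := by
      rw [Complex.sub_re, hmre]
      simp only [dGauss, dInt_eq_abs_sub_round]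
      exact le_max_left _ _
    have him : |(z - GaussianInt.toComplex m).im| ≤ dGauss z := by
      rw [Complex.sub_im, hmim]
      simp only [dGauss, dInt_eq_abs_sub_round]
      exact le_max_right _ _
    have h2 : ‖z - GaussianInt.toComplex m‖ ^ 2 =
        (z - GaussianInt.toComplex m).re ^ 2 + (z - GaussianInt.toComplex m).im ^ 2 := by
      rw [Complex.sq_norm, Complex.normSq_apply]; ring
    have hsq : ‖z - GaussianInt.toComplex m‖ ^ 2 ≤
        (Real.sqrt 2 * dGauss z) ^ 2 := by
      rw [h2, mul_pow, hs]
      nlinarith [mul_self_le_mul_self (abs_nonneg (z - GaussianInt.toComplex m).re) hre,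
        mul_self_le_mul_self (abs_nonneg (z - GaussianInt.toComplex m).im) him,
        sq_abs (z - GaussianInt.toComplex m).re, sq_abs (z - GaussianInt.toComplex m).im]
    exact (pow_le_pow_iff_left₀ (norm_nonneg _) (by positivity) two_ne_zero).1 hsq
  rw [div_le_iff₀ (by positivity)]
  have hup : (1 - Real.sqrt 2 / 4) / absG q ≤ Real.sqrt 2 * dGauss z := hlower.trans habs_le
  rw [div_le_iff₀ hQa] at hup
  have hs2 : Real.sqrt 2 ≤ 2 := by nlinarith
  nlinarith [hd0, hQa, hs0]
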